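/- Let N ≥ 1 be an integer. Then the map Φ : ℝ² → ℝ² defined by Φ(z₁, z₂) = (z₁ − z₂, ∏_{j=0}^{N−1} (z₁^(2^j) + z₂^(2^j))) is a bijection. -/

import Mathlib

open Filter Finset

/-- Telescoping identity. -/
lemma telescope_pow (a b : ℝ) (n : ℕ) :
    (a - b) * ∏ j ∈ Finset.range n, (a ^ (2 ^ j) + b ^ (2 ^ j))
      = a ^ (2 ^ n) - b ^ (2 ^ n) := by
  induction n with
  | zero => simp
  | succ n ih =>
    rw [Finset.prod_range_succ, ← mul_assoc, ih, pow_succ, pow_mul, pow_mul]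
    ring

lemma sum_two_pow (n : ℕ) : ∑ j ∈ Finset.range n, 2 ^ j = 2 ^ n - 1 := by
  induction n with
  | zero => simp
  | succ n ih =>
    rw [Finset.sum_range_succ, ih]
    have : 1 ≤ 2 ^ n := Nat.one_le_two_pow
    omega

lemma tendsto_finset_prod_atTop {ι : Type*} {l : Filter ℝ} (s : Finset ι)
    (hs : s.Nonempty) (F : ι → ℝ → ℝ)
    (h : ∀ j ∈ s, Tendsto (F j) l atTop) :
    Tendsto (fun z => ∏ j ∈ s, F j z) l atTop := by
  induction s using Finset.cons_induction with
  | empty => simp at hs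
  | cons a s ha ih =>
    simp only [Finset.prod_cons]
    rcases s.eq_empty_or_nonempty with rfl | hs'
    · simpa using h a (Finset.mem_cons_self a _)
    · exact (h a (Finset.mem_cons_self a _)).atTop_mul_atTop₀
        (ih hs' fun j hj => h j (Finset.mem_cons_of_mem hj))

lemma even_pow_tendsto_atBot_atTop {n : ℕ} (hn : Even n) (h0 : n ≠ 0) :
    Tendsto (fun z : ℝ => z ^ n) atBot atTop := by
  have : (fun z : ℝ => z ^ n) = fun z : ℝ => |z| ^ n := by
    funext z; rw [hn.pow_abs]
  rw [this]
  exact (tendsto_pow_atTop h0).comp tendsto_abs_atBot_atTop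

/-- For each `t`, `z ↦ ∏ ((z+t)^(2^j) + z^(2^j))` is bijective (for `N ≥ 1`). -/
lemma bijective_slice (N : ℕ) (hN : 1 ≤ N) (t : ℝ) :
    Function.Bijective (fun z : ℝ =>
      ∏ j ∈ Finset.range N, ((z + t) ^ (2 ^ j) + z ^ (2 ^ j))) := by
  set f : ℝ → ℝ := fun z => ∏ j ∈ Finset.range N, ((z + t) ^ (2 ^ j) + z ^ (2 ^ j)) with hf
  have hMpos : 1 ≤ 2 ^ N := Nat.one_le_two_pow
  have hModd : Odd (2 ^ N - 1) := by
    refine Nat.Even.sub_odd hMpos ?_ odd_one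
    exact (Nat.even_pow).2 ⟨even_two, by omega⟩
  constructor
  · -- injectivity
    by_cases ht : t = 0
    · subst ht
      have hform : f = fun z => 2 ^ N * z ^ (2 ^ N - 1) := by
        funext z
        simp only [hf, add_zero]
        have : ∀ j ∈ Finset.range N, z ^ (2 ^ j) + z ^ (2 ^ j) = 2 * z ^ (2 ^ j) := by
          intro j _; ring
        rw [Finset.prod_congr rfl this, Finset.prod_mul_distrib, Finset.prod_const,
          Finset.prod_pow_eq_pow_sum, sum_two_pow, Finset.card_range]
      rw [hform]
      intro a b hab
      have hsm : StrictMono (fun z : ℝ => 2 ^ N * z ^ (2 ^ N - 1)) :=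
        (Odd.strictMono_pow hModd).const_mul (by positivity)
      exact hsm.injective hab
    · -- t ≠ 0 : use the telescoping identity and strict monotonicity of
      -- g z = (z+t)^(2^N) - z^(2^N)
      set g : ℝ → ℝ := fun z => (z + t) ^ (2 ^ N) - z ^ (2 ^ N) with hg
      have hkey : ∀ z, t * f z = g z := by
        intro z
        have := telescope_pow (z + t) z N
        simpa [add_sub_cancel_left] using this
      have hderiv : ∀ z : ℝ, HasDerivAt g
          ((2 ^ N : ℕ) * (z + t) ^ (2 ^ N - 1) * 1 - (2 ^ N : ℕ) * z ^ (2 ^ N - 1)) z := by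
        intro z
        exact (((hasDerivAt_id z).add_const t).pow (2 ^ N)).sub (hasDerivAt_pow (2 ^ N) z)
      have hsmpow := Odd.strictMono_pow (R := ℝ) hModd
      intro a b hab
      have hgab : g a = g b := by rw [← hkey, ← hkey]; exact congrArg (t * ·) hab
      rcases lt_or_gt_of_ne ht with htneg | htpos
      · have hanti : StrictAnti g := by
          apply strictAnti_of_deriv_neg
          intro z
          rw [(hderiv z).deriv]
          have h1 : (z + t) ^ (2 ^ N - 1) < z ^ (2 ^ N - 1) :=
            hsmpow (by linarith)
          have h2 : (0:ℝ) < (2 ^ N : ℕ) := by positivity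
          nlinarith
        exact hanti.injective hgab
      · have hmono : StrictMono g := by
          apply strictMono_of_deriv_pos
          intro z
          rw [(hderiv z).deriv]
          have h1 : z ^ (2 ^ N - 1) < (z + t) ^ (2 ^ N - 1) :=
            hsmpow (by linarith)
          have h2 : (0:ℝ) < (2 ^ N : ℕ) := by positivity
          nlinarith
        exact hmono.injective hgab
  · -- surjectivity
    have hcont : Continuous f := by
      apply continuous_finset_prod
      intro j _
      exact ((continuous_id.add continuous_const).pow _).add (continuous_id.pow _)
    have hfac_top : ∀ j ∈ Finset.range N,
        Tendsto (fun z : ℝ => (z + t) ^ (2 ^ j) + z ^ (2 ^ j)) atTop atTop := by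
      intro j _
      have h1 : Tendsto (fun z : ℝ => (z + t) ^ (2 ^ j)) atTop atTop :=
        (tendsto_pow_atTop (by positivity)).comp (tendsto_atTop_add_const_right _ t tendsto_id)
      have h2 : Tendsto (fun z : ℝ => z ^ (2 ^ j)) atTop atTop :=
        tendsto_pow_atTop (by positivity)
      exact Filter.Tendsto.atTop_add_atTop h1 h2
    have htop : Tendsto f atTop atTop :=
      tendsto_finset_prod_atTop _ (by simp; omega) _ hfac_top
    have hfac0 : Tendsto (fun z : ℝ => (z + t) ^ (2 ^ 0) + z ^ (2 ^ 0)) atBot atBot := by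
      simp only [pow_zero, pow_one]
      exact Filter.Tendsto.atBot_add_atBot (tendsto_atBot_add_const_right _ t tendsto_id) tendsto_id
    have hbot : Tendsto f atBot atBot := by
      rcases eq_or_lt_of_le hN with h1 | h2
      · have : f = fun z => (z + t) ^ (2 ^ 0) + z ^ (2 ^ 0) := by
          funext z; simp only [hf]; rw [← h1, Finset.prod_range_one]
        rw [this]; exact hfac0
      · -- N ≥ 2
        obtain ⟨m, rfl⟩ : ∃ m, N = m + 1 := ⟨N - 1, by omega⟩
        have hfeq : f = fun z =>
            (∏ j ∈ Finset.range m, ((z + t) ^ (2 ^ (j + 1)) + z ^ (2 ^ (j + 1)))) *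
              ((z + t) ^ (2 ^ 0) + z ^ (2 ^ 0)) := by
          funext z; simp only [hf]; rw [Finset.prod_range_succ']
        rw [hfeq]
        have hprod : Tendsto (fun z : ℝ =>
            ∏ j ∈ Finset.range m, ((z + t) ^ (2 ^ (j + 1)) + z ^ (2 ^ (j + 1))))
            atBot atTop := by
          apply tendsto_finset_prod_atTop _ (by simp; omega)
          intro j _
          have heven : Even (2 ^ (j + 1)) :=
            (Nat.even_pow).2 ⟨even_two, j.succ_ne_zero⟩
          have h1 : Tendsto (fun z : ℝ => (z + t) ^ (2 ^ (j + 1))) atBot atTop :=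
            (even_pow_tendsto_atBot_atTop heven (by positivity)).comp
              (tendsto_atBot_add_const_right _ t tendsto_id)
          have h2 : Tendsto (fun z : ℝ => z ^ (2 ^ (j + 1))) atBot atTop :=
            even_pow_tendsto_atBot_atTop heven (by positivity)
          exact Filter.Tendsto.atTop_add_atTop h1 h2
        exact hprod.atTop_mul_atBot₀ hfac0
    exact hcont.surjective htop hbot

/-- For `N ≥ 1`, the map `Φ(z₁, z₂) = (z₁ − z₂, ∏_{j=0}^{N−1} (z₁^(2^j) + z₂^(2^j)))`
is a bijection of `ℝ²`. -/
theorem bijective_diff_prod_map (N : ℕ) (hN : 1 ≤ N) :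
    Function.Bijective (fun p : ℝ × ℝ =>
      (p.1 - p.2, ∏ j ∈ Finset.range N, (p.1 ^ (2 ^ j) + p.2 ^ (2 ^ j)))) := by
  have hrw : ∀ p : ℝ × ℝ,
      ∏ j ∈ Finset.range N, (p.1 ^ (2 ^ j) + p.2 ^ (2 ^ j))
        = ∏ j ∈ Finset.range N, ((p.2 + (p.1 - p.2)) ^ (2 ^ j) + p.2 ^ (2 ^ j)) := by
    intro p
    congr 1
    ext j
    congr 2
    ring
  constructor
  · intro p q hpq
    obtain ⟨h1, h2⟩ := Prod.ext_iff.1 hpq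
    simp only at h1 h2
    rw [hrw p, hrw q, h1] at h2
    have h3 : p.2 = q.2 := (bijective_slice N hN (q.1 - q.2)).1 h2
    have h4 : p.1 = q.1 := by
      have := h1; rw [h3] at this; linarith
    exact Prod.ext h4 h3
  · rintro ⟨s, r⟩
    obtain ⟨z, hz⟩ := (bijective_slice N hN s).2 r
    refine ⟨(z + s, z), ?_⟩
    simp only [Prod.mk.injEq]
    constructor
    · ring
    · rw [hrw (z + s, z)]
      simpa using hz
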